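/- Let K be a field and let A₀, A₁, B₀, B₁ be n×n matrices over K and d ∈ K satisfying (R1) A₀·B₀ + d·A₁·B₁ = I and (R2) A₀·B₁ + A₁·B₀ = 0. If a row vector v and a scalar k ∈ K satisfy v·A₀ = k·(v·A₁) (i.e. v·(A₀ − k·A₁) = 0), then (d − k²)·(v·(A₁·B₁)) = v; in particular, if v ≠ 0 then d ≠ k² and v is a left eigenvector of A₁·B₁ with eigenvalue 1/(d − k²). -/

import Mathlib

open Matrix

private lemma vecMul_smul' {K : Type*} [Field K] {n : Type*} [Fintype n]
    (v : n → K) (a : K) (M : Matrix n n K) : (a • v) ᵥ* M = a • (v ᵥ* M) :=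
  Matrix.smul_vecMul a v M

private lemma vecMul_smulM {K : Type*} [Field K] {n : Type*} [Fintype n]
    (v : n → K) (a : K) (M : Matrix n n K) : v ᵥ* (a • M) = a • (v ᵥ* M) := by
  ext i
  simp [Matrix.vecMul, dotProduct, Finset.mul_sum, mul_left_comm]

/-- Under (R1) `A₀·B₀ + d·A₁·B₁ = 1` and (R2) `A₀·B₁ + A₁·B₀ = 0`, if
`v·A₀ = k·(v·A₁)`, then `(d − k²)·(v·(A₁·B₁)) = v`; in particular, if `v ≠ 0`
then `d ≠ k²` and `v` is a left eigenvector of `A₁·B₁` with eigenvalue `1/(d − k²)`. -/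
theorem stmt_10 {K : Type*} [Field K] {n : Type*} [Fintype n] [DecidableEq n]
    (A₀ A₁ B₀ B₁ : Matrix n n K) (d : K)
    (hR1 : A₀ * B₀ + d • (A₁ * B₁) = 1)
    (hR2 : A₀ * B₁ + A₁ * B₀ = 0)
    (v : n → K) (k : K)
    (hv : v ᵥ* A₀ = k • (v ᵥ* A₁)) :
    (d - k ^ 2) • (v ᵥ* (A₁ * B₁)) = v ∧
      (v ≠ 0 → d ≠ k ^ 2 ∧ v ᵥ* (A₁ * B₁) = (1 / (d - k ^ 2)) • v) := by
  have h2 : v ᵥ* (A₀ * B₁) + v ᵥ* (A₁ * B₀) = 0 := by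
    rw [← vecMul_add, hR2, vecMul_zero]
  have h2' : k • (v ᵥ* (A₁ * B₁)) = - (v ᵥ* (A₁ * B₀)) := by
    have : v ᵥ* (A₀ * B₁) = k • (v ᵥ* (A₁ * B₁)) := by
      rw [← vecMul_vecMul, hv, vecMul_smul', vecMul_vecMul]
    rw [← this]; linear_combination (norm := module) h2
  have h0 : v ᵥ* (A₀ * B₀) = - (k ^ 2 • (v ᵥ* (A₁ * B₁))) := by
    have h3 : v ᵥ* (A₀ * B₀) = k • (v ᵥ* (A₁ * B₀)) := by
      rw [← vecMul_vecMul, hv, vecMul_smul', vecMul_vecMul]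
    rw [h3, neg_eq_iff_eq_neg.mp h2'.symm, smul_neg, smul_smul, ← sq]
  have h1 : v ᵥ* (A₀ * B₀) + d • (v ᵥ* (A₁ * B₁)) = v := by
    rw [← vecMul_smulM, ← vecMul_add, hR1, vecMul_one]
  have key : (d - k ^ 2) • (v ᵥ* (A₁ * B₁)) = v := by
    linear_combination (norm := module) h1 - h0
  refine ⟨key, fun hne => ?_⟩
  have hd : d - k ^ 2 ≠ 0 := by
    intro h
    rw [h, zero_smul] at key
    exact hne key.symm
  refine ⟨fun h => hd (by rw [h, sub_self]), ?_⟩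
  conv_rhs => rw [← key]
  rw [smul_smul, one_div, inv_mul_cancel₀ hd, one_smul]
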